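/- If in addition 1 − max_{i∈η} σ_i² > 2‖X̂ − X‖ (so that I − Γ² and I − Γ̂² are invertible), then ‖(I − Γ̂²)⁻¹ − (I − Γ²)⁻¹‖ ≤ 2‖X̂ − X‖ / (1 − max_{i∈η} σ_i² − 2‖X̂ − X‖)². -/

import Mathlib

open Matrix
set_option maxHeartbeats 1000000

noncomputable def specNorm {m n : Type*} [Fintype m] [Fintype n] [DecidableEq n]
    (A : Matrix m n ℝ) : ℝ :=
  ‖LinearMap.toContinuousLinearMap (Matrix.toEuclideanLin A)‖

noncomputable def vnorm {n : Type*} [Fintype n] (v : n → ℝ) : ℝ :=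
  Real.sqrt (∑ i, v i ^ 2)

lemma specNorm_nonneg {m n : Type*} [Fintype m] [Fintype n] [DecidableEq n]
    (A : Matrix m n ℝ) : 0 ≤ specNorm A := norm_nonneg _

lemma mulVec_norm_le {m n : Type*} [Fintype m] [Fintype n] [DecidableEq n]
    (A : Matrix m n ℝ) (x : EuclideanSpace ℝ n) :
    ‖(WithLp.equiv 2 (m → ℝ)).symm (A *ᵥ x)‖ ≤ specNorm A * ‖x‖ := by
  have := (LinearMap.toContinuousLinearMap (Matrix.toEuclideanLin A)).le_opNorm x
  simpa [Matrix.toEuclideanLin_apply, specNorm] using this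

lemma specNorm_le_bound {m n : Type*} [Fintype m] [Fintype n] [DecidableEq n]
    (A : Matrix m n ℝ) (c : ℝ) (hc : 0 ≤ c)
    (h : ∀ x : EuclideanSpace ℝ n, ‖(WithLp.equiv 2 (m → ℝ)).symm (A *ᵥ x)‖ ≤ c * ‖x‖) :
    specNorm A ≤ c := by
  apply ContinuousLinearMap.opNorm_le_bound _ hc
  intro x
  simpa [Matrix.toEuclideanLin_apply] using h x

lemma norm_sq_sum_smul {ι n : Type*} [Fintype ι] [DecidableEq ι] [Fintype n]
    (y : ι → EuclideanSpace ℝ n) (r : ι → ℝ)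
    (hy : ∀ a b, inner ℝ (y a) (y b) = if a = b then r a else (0:ℝ)) (c : ι → ℝ) :
    ‖∑ j, c j • y j‖ ^ 2 = ∑ j, c j ^ 2 * r j := by
  rw [← real_inner_self_eq_norm_sq, sum_inner]
  simp only [inner_sum, real_inner_smul_left, real_inner_smul_right, hy,
    mul_ite, mul_zero, Finset.sum_ite_eq', Finset.mem_univ, if_true]
  apply Finset.sum_congr rfl
  intro j _
  rw [Finset.sum_ite_eq]
  simp only [Finset.mem_univ, if_true]
  ring

lemma col_inner {m : Type*} [Fintype m] [DecidableEq m] (M : Matrix m m ℝ)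
    (hM : Mᵀ * M = 1) (a b : m) :
    inner ℝ ((WithLp.equiv 2 (m → ℝ)).symm (fun l => M l a))
      ((WithLp.equiv 2 (m → ℝ)).symm (fun l => M l b)) = if a = b then (1:ℝ) else 0 := by
  have h := congrFun (congrFun hM a) b
  rw [Matrix.mul_apply, Matrix.one_apply] at h
  rw [PiLp.inner_apply]
  simpa [Matrix.transpose_apply, mul_comm] using h

lemma svd_col (p k : ℕ) (X : Matrix (Fin p) (Fin k) ℝ) (U : Matrix (Fin p) (Fin p) ℝ)
    (V : Matrix (Fin k) (Fin k) ℝ) (σ : ℕ → ℝ) (hV : Vᵀ * V = 1)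
    (hSVD : X = U * (Matrix.of fun (i : Fin p) (j : Fin k) =>
        if (i : ℕ) = (j : ℕ) then σ (i : ℕ) else 0) * Vᵀ) (j : Fin k) :
    X *ᵥ (fun l => V l j) =
      fun i : Fin p => if h : (j:ℕ) < p then σ (j:ℕ) * U i ⟨(j:ℕ), h⟩ else 0 := by
  have hcol : (fun l => V l j) = V *ᵥ Pi.single j 1 := by
    funext l
    simp [Matrix.mulVec_single]
  rw [hcol, Matrix.mulVec_mulVec, hSVD, Matrix.mul_assoc (U * _) Vᵀ V, hV, Matrix.mul_one]
  funext i
  rw [Matrix.mulVec_single]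
  simp only [Pi.smul_apply, MulOpposite.op_one, one_smul, Matrix.col, Matrix.transpose_apply]
  rw [Matrix.mul_apply]
  simp only [Matrix.of_apply]
  by_cases h : (j:ℕ) < p
  · rw [dif_pos h]
    rw [Fintype.sum_eq_single (⟨(j:ℕ), h⟩ : Fin p)]
    · simp [mul_comm]
    · intro a ha
      rw [if_neg, mul_zero]
      intro hc
      exact ha (Fin.ext hc)
  · rw [dif_neg h]
    apply Finset.sum_eq_zero
    intro a _
    rw [if_neg, mul_zero]
    intro hc
    exact h (hc ▸ a.isLt)

-- Euclidean norm squared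
lemma eucl_norm_sq {n : Type*} [Fintype n] (x : EuclideanSpace ℝ n) :
    ‖x‖ ^ 2 = ∑ i, x i ^ 2 := by
  rw [EuclideanSpace.norm_eq, Real.sq_sqrt (by positivity)]
  simp [sq_abs]

lemma specNorm_diagonal_le {n : Type*} [Fintype n] [DecidableEq n]
    (d : n → ℝ) (c : ℝ) (hc : 0 ≤ c) (h : ∀ i, |d i| ≤ c) :
    specNorm (Matrix.diagonal d) ≤ c := by
  apply specNorm_le_bound _ c hc
  intro x
  have h1 : ∀ y : EuclideanSpace ℝ n, ‖y‖ = Real.sqrt (∑ i, y i ^ 2) :=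
    fun y => by rw [EuclideanSpace.norm_eq]; simp [sq_abs]
  rw [h1, h1]
  rw [show c * Real.sqrt (∑ i, x i ^ 2) = Real.sqrt (c^2 * ∑ i, x i ^2) by
    rw [Real.sqrt_mul (by positivity), Real.sqrt_sq hc]]
  apply Real.sqrt_le_sqrt
  rw [Finset.mul_sum]
  apply Finset.sum_le_sum
  intro i _
  have : ((WithLp.equiv 2 (n → ℝ)).symm (Matrix.diagonal d *ᵥ ⇑x)) i = d i * x i := by
    simp [Matrix.mulVec_diagonal]
  show ((WithLp.equiv 2 (n → ℝ)).symm (Matrix.diagonal d *ᵥ ⇑x)) i ^ 2 ≤ _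
  rw [this, mul_pow]
  have := h i
  have h2 : d i ^ 2 ≤ c ^ 2 := by nlinarith [abs_nonneg (d i), sq_abs (d i)]
  nlinarith [sq_nonneg (x i)]

noncomputable def vcolF {k : ℕ} (V : Matrix (Fin k) (Fin k) ℝ) (j : Fin k) :
    EuclideanSpace ℝ (Fin k) :=
  (WithLp.equiv 2 (Fin k → ℝ)).symm (fun l => V l j)

lemma toEuclideanLin_norm_le {m n : Type*} [Fintype m] [Fintype n] [DecidableEq n]
    (A : Matrix m n ℝ) (x : EuclideanSpace ℝ n) :
    ‖Matrix.toEuclideanLin A x‖ ≤ specNorm A * ‖x‖ := by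
  have := (LinearMap.toContinuousLinearMap (Matrix.toEuclideanLin A)).le_opNorm x
  simpa [specNorm] using this

lemma specNorm_sub_comm {m n : Type*} [Fintype m] [Fintype n] [DecidableEq n]
    (A B : Matrix m n ℝ) : specNorm (A - B) = specNorm (B - A) := by
  unfold specNorm
  rw [← neg_sub B A, map_neg, map_neg, norm_neg]

lemma inner_map_col (p k : ℕ) (X : Matrix (Fin p) (Fin k) ℝ)
    (U : Matrix (Fin p) (Fin p) ℝ) (V : Matrix (Fin k) (Fin k) ℝ) (σ : ℕ → ℝ)
    (hU : Uᵀ * U = 1) (hV : Vᵀ * V = 1)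
    (hSVD : X = U * (Matrix.of fun (i : Fin p) (j : Fin k) =>
        if (i : ℕ) = (j : ℕ) then σ (i : ℕ) else 0) * Vᵀ) (a b : Fin k) :
    (inner ℝ (Matrix.toEuclideanLin X (vcolF V a)) (Matrix.toEuclideanLin X (vcolF V b)) : ℝ)
      = if a = b then (if (a:ℕ) < p then σ (a:ℕ)^2 else 0) else 0 := by
  rw [Matrix.toEuclideanLin_apply, Matrix.toEuclideanLin_apply]
  have ha := svd_col p k X U V σ hV hSVD a
  have hb := svd_col p k X U V σ hV hSVD b
  rw [show (vcolF V a).ofLp = (fun l => V l a) from rfl, ha,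
      show (vcolF V b).ofLp = (fun l => V l b) from rfl, hb]
  rw [PiLp.inner_apply]
  by_cases hpa : (a:ℕ) < p
  · by_cases hpb : (b:ℕ) < p
    · simp only [dif_pos hpa, dif_pos hpb]
      have h2 := col_inner U hU ⟨(a:ℕ), hpa⟩ ⟨(b:ℕ), hpb⟩
      rw [PiLp.inner_apply] at h2
      simp only [WithLp.equiv_symm_apply, WithLp.ofLp_toLp, RCLike.inner_apply, starRingEnd_apply,
        star_trivial] at h2 ⊢
      simp only [mul_comm (U _ ⟨(b:ℕ), hpb⟩), mul_comm (σ (b:ℕ) * _)] at h2 ⊢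
      have : ∑ i, (σ (a:ℕ) * U i ⟨(a:ℕ), hpa⟩) * (σ (b:ℕ) * U i ⟨(b:ℕ), hpb⟩)
          = σ (a:ℕ) * σ (b:ℕ) * ∑ i, U i ⟨(a:ℕ), hpa⟩ * U i ⟨(b:ℕ), hpb⟩ := by
        rw [Finset.mul_sum]; apply Finset.sum_congr rfl; intro i _; ring
      rw [this, h2]
      by_cases hab : a = b
      · subst hab; simp [sq, hpa]
      · have : (⟨(a:ℕ), hpa⟩ : Fin p) ≠ ⟨(b:ℕ), hpb⟩ := by
          intro hc; exact hab (Fin.ext (by simpa using congrArg Fin.val hc))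
        rw [if_neg this, if_neg hab, mul_zero]
    · simp only [dif_pos hpa, dif_neg hpb]
      have hab : a ≠ b := fun hc => hpb (hc ▸ hpa)
      simp [hab]
  · simp only [dif_neg hpa]
    simp [hpa]
lemma weyl (p k : ℕ)
    (X Xh : Matrix (Fin p) (Fin k) ℝ)
    (U Uh : Matrix (Fin p) (Fin p) ℝ) (V Vh : Matrix (Fin k) (Fin k) ℝ)
    (hU : Uᵀ * U = 1) (hV : Vᵀ * V = 1) (hUh : Uhᵀ * Uh = 1) (hVh : Vhᵀ * Vh = 1)
    (σ σh : ℕ → ℝ)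
    (hσanti : ∀ i j, i ≤ j → σ j ≤ σ i) (hσnonneg : ∀ i, 0 ≤ σ i)
    (hσhanti : ∀ i j, i ≤ j → σh j ≤ σh i) (hσhnonneg : ∀ i, 0 ≤ σh i)
    (hSVD : X = U * (Matrix.of fun (i : Fin p) (j : Fin k) =>
        if (i : ℕ) = (j : ℕ) then σ (i : ℕ) else 0) * Vᵀ)
    (hSVDh : Xh = Uh * (Matrix.of fun (i : Fin p) (j : Fin k) =>
        if (i : ℕ) = (j : ℕ) then σh (i : ℕ) else 0) * Vhᵀ)
    (i : ℕ) (hip : i < p) (hik : i < k) :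
    σ i ≤ σh i + specNorm (Xh - X) := by
  classical
  set ε := specNorm (Xh - X) with hε
  have hεnn : 0 ≤ ε := specNorm_nonneg _
  -- index embeddings
  have hik' : i + 1 ≤ k := hik
  set g : Fin (i+1) → Fin k := fun a => ⟨(a:ℕ), lt_of_lt_of_le a.isLt hik'⟩ with hg
  set gh : Fin (k-i) → Fin k := fun a => ⟨i + (a:ℕ), by omega⟩ with hgh
  have hginj : Function.Injective g := by
    intro a b hab
    exact Fin.ext (by simpa [hg] using congrArg Fin.val hab)
  have hghinj : Function.Injective gh := by
    intro a b hab
    have := congrArg Fin.val hab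
    simp only [hgh] at this
    exact Fin.ext (by omega)
  -- the subspaces
  set W := Submodule.span ℝ (Set.range (fun a => vcolF V (g a))) with hW
  set Wh := Submodule.span ℝ (Set.range (fun a => vcolF Vh (gh a))) with hWh
  -- orthonormality of the two families
  have hVon : Orthonormal ℝ (fun a => vcolF V (g a)) := by
    rw [orthonormal_iff_ite]
    intro a b
    rw [show (inner ℝ (vcolF V (g a)) (vcolF V (g b)) : ℝ) = _ from col_inner V hV (g a) (g b)]
    by_cases hab : a = b
    · simp [hab]
    · rw [if_neg (fun hc => hab (hginj hc)), if_neg hab]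
  have hVhon : Orthonormal ℝ (fun a => vcolF Vh (gh a)) := by
    rw [orthonormal_iff_ite]
    intro a b
    rw [show (inner ℝ (vcolF Vh (gh a)) (vcolF Vh (gh b)) : ℝ) = _ from col_inner Vh hVh (gh a) (gh b)]
    by_cases hab : a = b
    · simp [hab]
    · rw [if_neg (fun hc => hab (hghinj hc)), if_neg hab]
  -- dimensions
  have hdimW : Module.finrank ℝ W = i + 1 := by
    rw [hW, finrank_span_eq_card hVon.linearIndependent]
    simp
  have hdimWh : Module.finrank ℝ Wh = k - i := by
    rw [hWh, finrank_span_eq_card hVhon.linearIndependent]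
    simp
  -- nontrivial intersection
  have hsup := Submodule.finrank_sup_add_finrank_inf_eq W Wh
  have hle : Module.finrank ℝ ↥(W ⊔ Wh) ≤ k := by
    have := Submodule.finrank_le (W ⊔ Wh)
    simpa [finrank_euclideanSpace_fin] using this
  have hpos : 0 < Module.finrank ℝ ↥(W ⊓ Wh) := by omega
  obtain ⟨w', hw'⟩ := Module.finrank_pos_iff_exists_ne_zero.mp hpos
  obtain ⟨w, hwmem⟩ := w'
  have hwW : w ∈ W := hwmem.1
  have hwWh : w ∈ Wh := hwmem.2
  have hwne : w ≠ 0 := by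
    intro hc
    exact hw' (Subtype.ext hc)
  have hwpos : 0 < ‖w‖ := norm_pos_iff.mpr hwne
  -- coefficients
  obtain ⟨c, hc⟩ := Submodule.mem_span_range_iff_exists_fun ℝ |>.mp (hW ▸ hwW)
  obtain ⟨d, hd⟩ := Submodule.mem_span_range_iff_exists_fun ℝ |>.mp (hWh ▸ hwWh)
  -- norms of w
  have hwsq1 : ‖w‖^2 = ∑ a, c a ^ 2 := by
    rw [← hc, norm_sq_sum_smul _ (fun _ => (1:ℝ))]
    · simp
    · intro a b
      rw [show (inner ℝ (vcolF V (g a)) (vcolF V (g b)) : ℝ) = _ from col_inner V hV (g a) (g b)]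
      by_cases hab : a = b
      · simp [hab]
      · rw [if_neg (fun hc => hab (hginj hc)), if_neg hab]
  have hwsq2 : ‖w‖^2 = ∑ a, d a ^ 2 := by
    rw [← hd, norm_sq_sum_smul _ (fun _ => (1:ℝ))]
    · simp
    · intro a b
      rw [show (inner ℝ (vcolF Vh (gh a)) (vcolF Vh (gh b)) : ℝ) = _ from col_inner Vh hVh (gh a) (gh b)]
      by_cases hab : a = b
      · simp [hab]
      · rw [if_neg (fun hc => hab (hghinj hc)), if_neg hab]
  -- image under X
  have hXw : Matrix.toEuclideanLin X w = ∑ a, c a • Matrix.toEuclideanLin X (vcolF V (g a)) := by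
    rw [← hc, map_sum]
    simp [_root_.map_smul]
  have hXhw : Matrix.toEuclideanLin Xh w = ∑ a, d a • Matrix.toEuclideanLin Xh (vcolF Vh (gh a)) := by
    rw [← hd, map_sum]
    simp [_root_.map_smul]
  have hXwsq : ‖Matrix.toEuclideanLin X w‖^2 = ∑ a, c a ^ 2 * σ ((g a : Fin k) : ℕ) ^ 2 := by
    rw [hXw, norm_sq_sum_smul _ (fun a => σ ((g a : Fin k) : ℕ) ^ 2)]
    intro a b
    rw [inner_map_col p k X U V σ hU hV hSVD (g a) (g b)]
    have hap : ((g a : Fin k) : ℕ) < p := by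
      have : ((g a : Fin k) : ℕ) = (a : ℕ) := rfl
      omega
    by_cases hab : a = b
    · subst hab; simp [hap]
    · rw [if_neg (fun hc => hab (hginj hc)), if_neg hab]
  have hXhwsq : ‖Matrix.toEuclideanLin Xh w‖^2
      = ∑ a, d a ^ 2 * (if ((gh a : Fin k) : ℕ) < p then σh ((gh a : Fin k) : ℕ) ^ 2 else 0) := by
    rw [hXhw, norm_sq_sum_smul _ (fun a => if ((gh a : Fin k) : ℕ) < p then σh ((gh a : Fin k) : ℕ) ^ 2 else 0)]
    intro a b
    rw [inner_map_col p k Xh Uh Vh σh hUh hVh hSVDh (gh a) (gh b)]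
    by_cases hab : a = b
    · subst hab; simp
    · rw [if_neg (fun hc => hab (hghinj hc)), if_neg hab]
  -- lower bound for ‖Xw‖
  have hlow : σ i ^ 2 * ‖w‖^2 ≤ ‖Matrix.toEuclideanLin X w‖^2 := by
    rw [hXwsq, hwsq1, Finset.mul_sum]
    apply Finset.sum_le_sum
    intro a _
    have hga : ((g a : Fin k) : ℕ) ≤ i := by
      have : ((g a : Fin k) : ℕ) = (a : ℕ) := rfl
      omega
    have h1 : σ i ≤ σ ((g a : Fin k) : ℕ) := hσanti _ _ hga
    have h2 : 0 ≤ σ i := hσnonneg i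
    have h3 : σ i ^ 2 ≤ σ ((g a : Fin k) : ℕ) ^ 2 := by nlinarith
    nlinarith [sq_nonneg (c a), h3]
  -- upper bound for ‖Xh w‖
  have hup : ‖Matrix.toEuclideanLin Xh w‖^2 ≤ σh i ^ 2 * ‖w‖^2 := by
    rw [hXhwsq, hwsq2, Finset.mul_sum]
    apply Finset.sum_le_sum
    intro a _
    have hga : i ≤ ((gh a : Fin k) : ℕ) := by
      have : ((gh a : Fin k) : ℕ) = i + (a : ℕ) := rfl
      omega
    by_cases hap : ((gh a : Fin k) : ℕ) < p
    · rw [if_pos hap]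
      have h1 : σh ((gh a : Fin k) : ℕ) ≤ σh i := hσhanti _ _ hga
      have h2 : 0 ≤ σh ((gh a : Fin k) : ℕ) := hσhnonneg _
      have h3 : σh ((gh a : Fin k) : ℕ) ^ 2 ≤ σh i ^ 2 := by nlinarith
      nlinarith [sq_nonneg (d a), h3]
    · rw [if_neg hap, mul_zero]
      have := hσhnonneg i
      nlinarith [sq_nonneg (d a)]
  -- norm inequalities (de-square)
  have hXwnn : (0:ℝ) ≤ ‖Matrix.toEuclideanLin X w‖ := norm_nonneg _
  have hXhwnn : (0:ℝ) ≤ ‖Matrix.toEuclideanLin Xh w‖ := norm_nonneg _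
  have hlow' : σ i * ‖w‖ ≤ ‖Matrix.toEuclideanLin X w‖ := by
    have h1 : 0 ≤ σ i * ‖w‖ := mul_nonneg (hσnonneg i) (norm_nonneg w)
    nlinarith [hlow]
  have hup' : ‖Matrix.toEuclideanLin Xh w‖ ≤ σh i * ‖w‖ := by
    have h1 : 0 ≤ σh i * ‖w‖ := mul_nonneg (hσhnonneg i) (norm_nonneg w)
    nlinarith [hup]
  -- perturbation
  have hpert : ‖Matrix.toEuclideanLin X w‖
      ≤ ‖Matrix.toEuclideanLin Xh w‖ + ε * ‖w‖ := by
    have hsub : Matrix.toEuclideanLin X w - Matrix.toEuclideanLin Xh w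
        = Matrix.toEuclideanLin (X - Xh) w := by
      rw [map_sub]
      rfl
    have h1 : ‖Matrix.toEuclideanLin (X - Xh) w‖ ≤ specNorm (X - Xh) * ‖w‖ :=
      toEuclideanLin_norm_le _ _
    have h2 : specNorm (X - Xh) = ε := by rw [hε, specNorm_sub_comm]
    calc ‖Matrix.toEuclideanLin X w‖
        ≤ ‖Matrix.toEuclideanLin Xh w‖ + ‖Matrix.toEuclideanLin X w - Matrix.toEuclideanLin Xh w‖ := by
          have := norm_sub_norm_le (Matrix.toEuclideanLin X w) (Matrix.toEuclideanLin Xh w)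
          linarith [norm_sub_rev (Matrix.toEuclideanLin X w) (Matrix.toEuclideanLin Xh w) ▸ this]
      _ ≤ ‖Matrix.toEuclideanLin Xh w‖ + ε * ‖w‖ := by
          rw [hsub]
          rw [h2] at h1
          linarith
  have : σ i * ‖w‖ ≤ (σh i + ε) * ‖w‖ := by
    calc σ i * ‖w‖ ≤ ‖Matrix.toEuclideanLin X w‖ := hlow'
      _ ≤ ‖Matrix.toEuclideanLin Xh w‖ + ε * ‖w‖ := hpert
      _ ≤ σh i * ‖w‖ + ε * ‖w‖ := by linarith
      _ = (σh i + ε) * ‖w‖ := by ring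
  exact le_of_mul_le_mul_right (by linarith [this]) hwpos

lemma sval_le (p k : ℕ) (X : Matrix (Fin p) (Fin k) ℝ)
    (U : Matrix (Fin p) (Fin p) ℝ) (V : Matrix (Fin k) (Fin k) ℝ) (σ : ℕ → ℝ)
    (hU : Uᵀ * U = 1) (hV : Vᵀ * V = 1)
    (hSVD : X = U * (Matrix.of fun (i : Fin p) (j : Fin k) =>
        if (i : ℕ) = (j : ℕ) then σ (i : ℕ) else 0) * Vᵀ)
    (hσnonneg : ∀ i, 0 ≤ σ i)
    (i : ℕ) (hip : i < p) (hik : i < k) : σ i ≤ specNorm X := by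
  set v := vcolF V ⟨i, hik⟩ with hv
  have h1 : ‖v‖^2 = 1 := by
    rw [← real_inner_self_eq_norm_sq]
    have := col_inner V hV ⟨i, hik⟩ ⟨i, hik⟩
    simpa [hv, vcolF] using this
  have h2 : ‖Matrix.toEuclideanLin X v‖^2 = σ i ^ 2 := by
    rw [← real_inner_self_eq_norm_sq]
    have := inner_map_col p k X U V σ hU hV hSVD ⟨i, hik⟩ ⟨i, hik⟩
    simpa [hip] using this
  have h3 := toEuclideanLin_norm_le X v
  have hv1 : ‖v‖ = 1 := by nlinarith [norm_nonneg v]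
  have h4 : σ i ≤ ‖Matrix.toEuclideanLin X v‖ := by
    nlinarith [norm_nonneg (Matrix.toEuclideanLin X v), hσnonneg i]
  rw [hv1, mul_one] at h3
  linarith

theorem stmt_16
    (p k : ℕ)
    (X Xh : Matrix (Fin p) (Fin k) ℝ)
    (U Uh : Matrix (Fin p) (Fin p) ℝ) (V Vh : Matrix (Fin k) (Fin k) ℝ)
    (hU : Uᵀ * U = 1) (hV : Vᵀ * V = 1) (hUh : Uhᵀ * Uh = 1) (hVh : Vhᵀ * Vh = 1)
    (σ σh : ℕ → ℝ)
    (hσanti : ∀ i j, i ≤ j → σ j ≤ σ i) (hσnonneg : ∀ i, 0 ≤ σ i)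
    (hσhanti : ∀ i j, i ≤ j → σh j ≤ σh i) (hσhnonneg : ∀ i, 0 ≤ σh i)
    (hSVD : X = U * (Matrix.of fun (i : Fin p) (j : Fin k) =>
        if (i : ℕ) = (j : ℕ) then σ (i : ℕ) else 0) * Vᵀ)
    (hSVDh : Xh = Uh * (Matrix.of fun (i : Fin p) (j : Fin k) =>
        if (i : ℕ) = (j : ℕ) then σh (i : ℕ) else 0) * Vhᵀ)
    (η : Finset ℕ) (hη : ∀ i ∈ η, i < min p k)
    (Δ : ℝ)
    (hΔ : ∀ i ∈ η, ∀ j, j < min p k → j ∉ η → Δ ≤ |σ i - σ j|)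
    (hX1 : specNorm X ≤ 1) (hXh1 : specNorm Xh ≤ 1)
    (hgap : 4 * specNorm (Xh - X) < Δ)
    (hηne : η.Nonempty)
    (Γ Γh : Matrix {x // x ∈ η} {x // x ∈ η} ℝ)
    (hΓ : Γ = Matrix.diagonal (fun i : {x // x ∈ η} => σ i.1))
    (hΓh : Γh = Matrix.diagonal (fun i : {x // x ∈ η} => σh i.1))
    (hmax : 2 * specNorm (Xh - X) < 1 - η.sup' hηne (fun i => σ i ^ 2)) :
    specNorm ((1 - Γh ^ 2)⁻¹ - (1 - Γ ^ 2)⁻¹)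
      ≤ 2 * specNorm (Xh - X)
          / (1 - η.sup' hηne (fun i => σ i ^ 2) - 2 * specNorm (Xh - X)) ^ 2 := by
  classical
  set ε := specNorm (Xh - X) with hε
  have hεnn : 0 ≤ ε := specNorm_nonneg _
  set M := η.sup' hηne (fun i => σ i ^ 2) with hM
  set den := 1 - M - 2 * ε with hden
  have hdenpos : 0 < den := by rw [hden]; linarith
  -- diagonal forms
  have hD : (1 - Γ ^ 2) = Matrix.diagonal (fun i : {x // x ∈ η} => 1 - σ i.1 ^ 2) := by
    rw [hΓ, sq, Matrix.diagonal_mul_diagonal, ← Matrix.diagonal_one, Matrix.diagonal_sub]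
    congr 1
    funext i
    ring
  have hDh : (1 - Γh ^ 2) = Matrix.diagonal (fun i : {x // x ∈ η} => 1 - σh i.1 ^ 2) := by
    rw [hΓh, sq, Matrix.diagonal_mul_diagonal, ← Matrix.diagonal_one, Matrix.diagonal_sub]
    congr 1
    funext i
    ring
  -- entrywise facts
  have hfacts : ∀ i : {x // x ∈ η},
      den ≤ 1 - σ i.1 ^ 2 ∧ den ≤ 1 - σh i.1 ^ 2 ∧ |(1 - σh i.1 ^2) - (1 - σ i.1 ^2)| ≤ 2 * ε := by
    intro i
    have hjp : i.1 < p := lt_of_lt_of_le (hη i.1 i.2) (min_le_left p k)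
    have hjk : i.1 < k := lt_of_lt_of_le (hη i.1 i.2) (min_le_right p k)
    have h1 : σ i.1 ≤ σh i.1 + ε :=
      weyl p k X Xh U Uh V Vh hU hV hUh hVh σ σh hσanti hσnonneg hσhanti hσhnonneg
        hSVD hSVDh i.1 hjp hjk
    have h2 : σh i.1 ≤ σ i.1 + ε := by
      have := weyl p k Xh X Uh U Vh V hUh hVh hU hV σh σ hσhanti hσhnonneg hσanti hσnonneg
        hSVDh hSVD i.1 hjp hjk
      rwa [specNorm_sub_comm, ← hε] at this
    have h3 : σ i.1 ≤ 1 := le_trans (sval_le p k X U V σ hU hV hSVD hσnonneg i.1 hjp hjk) hX1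
    have h4 : σh i.1 ≤ 1 := le_trans (sval_le p k Xh Uh Vh σh hUh hVh hSVDh hσhnonneg i.1 hjp hjk) hXh1
    have h5 : σ i.1 ^ 2 ≤ M := Finset.le_sup' (fun j => σ j ^ 2) i.2
    have h6 : 0 ≤ σ i.1 := hσnonneg _
    have h7 : 0 ≤ σh i.1 := hσhnonneg _
    refine ⟨by rw [hden]; nlinarith, ?_, ?_⟩
    · rw [hden]
      have : σh i.1 ^ 2 ≤ σ i.1 ^ 2 + 2 * ε := by nlinarith
      linarith
    · rw [abs_le]
      constructor <;> nlinarith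
  -- rewrite inverses
  have hinv : (1 - Γ ^ 2)⁻¹ = Matrix.diagonal (fun i : {x // x ∈ η} => (1 - σ i.1 ^ 2)⁻¹) := by
    rw [hD]
    apply Matrix.inv_eq_right_inv
    rw [Matrix.diagonal_mul_diagonal]
    rw [show (fun i : {x // x ∈ η} => (1 - σ i.1 ^ 2) * (1 - σ i.1 ^ 2)⁻¹) = fun _ => (1:ℝ) from
      funext fun i => mul_inv_cancel₀ (ne_of_gt (lt_of_lt_of_le hdenpos (hfacts i).1))]
    exact Matrix.diagonal_one
  have hinvh : (1 - Γh ^ 2)⁻¹ = Matrix.diagonal (fun i : {x // x ∈ η} => (1 - σh i.1 ^ 2)⁻¹) := by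
    rw [hDh]
    apply Matrix.inv_eq_right_inv
    rw [Matrix.diagonal_mul_diagonal]
    rw [show (fun i : {x // x ∈ η} => (1 - σh i.1 ^ 2) * (1 - σh i.1 ^ 2)⁻¹) = fun _ => (1:ℝ) from
      funext fun i => mul_inv_cancel₀ (ne_of_gt (lt_of_lt_of_le hdenpos (hfacts i).2.1))]
    exact Matrix.diagonal_one
  rw [hinv, hinvh, Matrix.diagonal_sub]
  apply specNorm_diagonal_le
  · positivity
  · intro i
    obtain ⟨ha, hb, habs⟩ := hfacts i
    have hapos : 0 < 1 - σ i.1 ^ 2 := lt_of_lt_of_le hdenpos ha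
    have hbpos : 0 < 1 - σh i.1 ^ 2 := lt_of_lt_of_le hdenpos hb
    have key : (1 - σh i.1 ^ 2)⁻¹ - (1 - σ i.1 ^ 2)⁻¹
        = ((1 - σ i.1 ^ 2) - (1 - σh i.1 ^ 2)) / ((1 - σ i.1 ^ 2) * (1 - σh i.1 ^ 2)) := by
      field_simp
    rw [key, abs_div, abs_of_pos (mul_pos hapos hbpos)]
    have h1 : |(1 - σ i.1 ^ 2) - (1 - σh i.1 ^ 2)| ≤ 2 * ε := by
      rw [abs_sub_comm]; exact habs
    have h2 : den ^ 2 ≤ (1 - σ i.1 ^ 2) * (1 - σh i.1 ^ 2) := by nlinarith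
    exact div_le_div₀ (by linarith) h1 (by positivity) h2
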